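/- arXiv:0910.2941 — 3 statements merged into one kernel-verified Lean document; each statement's English description precedes it below -/
import Mathlib

section
/- For all natural numbers a, b, c with a + b + c = n, the multinomial coefficient n!/(a!·b!·c!) is at most n!/(⌊(n+2)/3⌋! · ⌊(n+1)/3⌋! · ⌊n/3⌋!). -/
/-- The balanced factorial product is a lower bound for `a! * b! * c!`. -/
theorem balanced_factorial_min : ∀ n a b c : ℕ, a + b + c = n →
    ((n + 2) / 3).factorial * ((n + 1) / 3).factorial * (n / 3).factorial ≤
      a.factorial * b.factorial * c.factorial := by
  intro n
  induction n using Nat.strong_induction_on with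
  | _ n ih =>
    match n with
    | 0 =>
      intro a b c h
      have ha : a = 0 := by omega
      have hb : b = 0 := by omega
      have hc : c = 0 := by omega
      subst ha hb hc
      simp [Nat.factorial]
    | m + 1 =>
      intro a b c h
      have hstep : ∀ x y z : ℕ, x + y + z = m + 1 → y ≤ x → z ≤ x →
          ((m + 1 + 2) / 3).factorial * ((m + 1 + 1) / 3).factorial *
            ((m + 1) / 3).factorial ≤ x.factorial * y.factorial * z.factorial := by
        intro x y z hxyz hy hz
        have hx1 : 1 ≤ x := by omega
        have hIH := ih m (by omega) (x - 1) y z (by omega)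
        have hxf : x.factorial = x * (x - 1).factorial := by
          obtain ⟨k, rfl⟩ : ∃ k, x = k + 1 := ⟨x - 1, by omega⟩
          simp [Nat.factorial_succ]
        have h1 : (m + 1 + 2) / 3 = m / 3 + 1 := by omega
        have h2 : (m + 1 + 1) / 3 = (m + 2) / 3 := by omega
        have h3 : (m + 1) / 3 = (m + 1) / 3 := rfl
        have hxge : m / 3 + 1 ≤ x := by omega
        calc ((m + 1 + 2) / 3).factorial * ((m + 1 + 1) / 3).factorial *
              ((m + 1) / 3).factorial
            = (m / 3 + 1) * (((m + 2) / 3).factorial * ((m + 1) / 3).factorial *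
              (m / 3).factorial) := by
              rw [h1, h2, Nat.factorial_succ]; ring
          _ ≤ x * ((x - 1).factorial * y.factorial * z.factorial) :=
              Nat.mul_le_mul hxge hIH
          _ = x.factorial * y.factorial * z.factorial := by rw [hxf]; ring
      by_cases h1 : b ≤ a ∧ c ≤ a
      · exact hstep a b c h h1.1 h1.2
      · by_cases h2 : a ≤ b ∧ c ≤ b
        · have := hstep b a c (by omega) h2.1 h2.2
          calc _ ≤ b.factorial * a.factorial * c.factorial := this
            _ = a.factorial * b.factorial * c.factorial := by ring
        · have hc : a ≤ c ∧ b ≤ c := by omega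
          have := hstep c a b (by omega) hc.1 hc.2
          calc _ ≤ c.factorial * a.factorial * b.factorial := this
            _ = a.factorial * b.factorial * c.factorial := by ring

/-- For `a + b + c = n`, the multinomial coefficient `n!/(a!·b!·c!)` is at most
`n!/(⌊(n+2)/3⌋!·⌊(n+1)/3⌋!·⌊n/3⌋!)`. -/
theorem multinomial_le_balanced (n a b c : ℕ) (h : a + b + c = n) :
    n.factorial / (a.factorial * b.factorial * c.factorial) ≤
      n.factorial /
        (((n + 2) / 3).factorial * ((n + 1) / 3).factorial * (n / 3).factorial) := by
  apply Nat.div_le_div_left (balanced_factorial_min n a b c h)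
  positivity
end

section
/- Let H be a 3-partite 3-graph with 3-partition U₁, U₂, U₃ satisfying: (i) for every pair of vertices u ∈ U_i, v ∈ U_j (i ≠ j) contained in some edge, the link L(u,v) = {w ∈ U_ℓ : {u,v,w} ∈ H} has size > n/10 (where {i,j,ℓ} = {1,2,3}); and (ii) for every {i,j,ℓ} = {1,2,3}, all A_i ⊆ U_i, A_j ⊆ U_j with |A_i|, |A_j| > n/10, and every v ∈ U_ℓ, the number of edges of H containing v and intersecting both A_i and A_j is at least |A_i||A_j|/10. Suppose further that every pair of vertices lies in some edge's link structure as needed, i.e., condition (i) holds for all u,v in distinct parts. Then the 3-partition of H is unique: any partition V₁, V₂, V₃ of the vertex set into three parts such that every edge of H has exactly one vertex in each part equals {U₁, U₂, U₃} as an unordered partition. -/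
/-- Uniqueness of the 3-partition: if a 3-partite 3-graph `H` on `n` vertices,
with 3-partition given by a surjective `f : V → Fin 3`, satisfies
(i) every pair of vertices in distinct parts has link of size `> n/10`, and
(ii) for distinct parts `i, j, ℓ`, any `Aᵢ ⊆ Uᵢ`, `Aⱼ ⊆ Uⱼ` with
`|Aᵢ|, |Aⱼ| > n/10` and any `v ∈ U_ℓ`, the number of edges of `H` containing
`v` and meeting both `Aᵢ` and `Aⱼ` is at least `|Aᵢ||Aⱼ|/10`,
then any other 3-partition (surjective `g : V → Fin 3` with every edge having
exactly one vertex in each `g`-part) equals the partition given by `f` as an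
unordered partition. -/
theorem tripartition_unique {V : Type*} [Fintype V] [DecidableEq V]
    (H : Finset (Finset V)) (hcard : ∀ e ∈ H, e.card = 3)
    (n : ℕ) (hn : n = Fintype.card V)
    (f : V → Fin 3) (hfsurj : Function.Surjective f)
    (hf : ∀ e ∈ H, ∀ i : Fin 3, (e.filter (fun v => f v = i)).card = 1)
    (hlink : ∀ u v : V, f u ≠ f v →
      ∀ ℓ : Fin 3, ℓ ≠ f u → ℓ ≠ f v →
        ((Finset.univ.filter (fun w : V =>
            f w = ℓ ∧ ({u, v, w} : Finset V) ∈ H)).card : ℝ) > n / 10)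
    (hpair : ∀ i j ℓ : Fin 3, i ≠ j → j ≠ ℓ → i ≠ ℓ →
      ∀ Ai Aj : Finset V, (∀ a ∈ Ai, f a = i) → (∀ a ∈ Aj, f a = j) →
        (Ai.card : ℝ) > n / 10 → (Aj.card : ℝ) > n / 10 →
        ∀ v : V, f v = ℓ →
          ((H.filter (fun e => v ∈ e ∧ (∃ a ∈ Ai, a ∈ e) ∧
              (∃ a ∈ Aj, a ∈ e))).card : ℝ) ≥ (Ai.card : ℝ) * Aj.card / 10)
    (g : V → Fin 3) (hgsurj : Function.Surjective g)
    (hg : ∀ e ∈ H, ∀ i : Fin 3, (e.filter (fun v => g v = i)).card = 1) :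
    ∃ σ : Equiv.Perm (Fin 3), ∀ v : V, g v = σ (f v) := by

  -- Step 1: vertices in distinct f-parts lie in distinct g-parts
  have third : ∀ a b : Fin 3, a ≠ b → ∃ ℓ : Fin 3, ℓ ≠ a ∧ ℓ ≠ b := by decide
  have key : ∀ u v : V, f u ≠ f v → g u ≠ g v := by
    intro u v huv
    obtain ⟨ℓ, hℓu, hℓv⟩ := third (f u) (f v) huv
    have hpos := hlink u v huv ℓ hℓu hℓv
    have hge : (0 : ℝ) ≤ (n : ℝ) / 10 := by positivity
    have hcardpos : 0 < (Finset.univ.filter (fun w : V =>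
        f w = ℓ ∧ ({u, v, w} : Finset V) ∈ H)).card := by
      by_contra h
      push_neg at h
      have h0 : (Finset.univ.filter (fun w : V =>
        f w = ℓ ∧ ({u, v, w} : Finset V) ∈ H)).card = 0 := Nat.le_zero.mp h
      rw [h0] at hpos
      push_cast at hpos
      linarith
    obtain ⟨w, hw⟩ := Finset.card_pos.mp hcardpos
    simp only [Finset.mem_filter] at hw
    obtain ⟨-, hwℓ, he⟩ := hw
    intro hguv
    have h1 := hg _ he (g u)
    have huv' : u ≠ v := fun h => huv (by rw [h])
    have hsub : ({u, v} : Finset V) ⊆ ({u, v, w} : Finset V).filter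
        (fun x => g x = g u) := by
      intro x hx
      simp only [Finset.mem_insert, Finset.mem_singleton] at hx
      rcases hx with rfl | rfl <;> simp [Finset.mem_filter, hguv]
    have h2 : ({u, v} : Finset V).card = 2 := Finset.card_pair huv'
    have := Finset.card_le_card hsub
    omega
  -- Step 2: vertices in the same f-part lie in the same g-part
  have key2 : ∀ u v : V, f u = f v → g u = g v := by
    intro u v huv
    by_contra hne
    obtain ⟨j, l, hj, hl, hjl⟩ : ∃ j l : Fin 3, j ≠ f u ∧ l ≠ f u ∧ j ≠ l := by
      have : ∀ a : Fin 3, ∃ j l : Fin 3, j ≠ a ∧ l ≠ a ∧ j ≠ l := by decide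
      exact this (f u)
    obtain ⟨a, ha⟩ := hfsurj j
    obtain ⟨b, hb⟩ := hfsurj l
    have hau : g a ≠ g u := key a u (by rw [ha]; exact hj)
    have hav : g a ≠ g v := key a v (by rw [ha, ← huv]; exact hj)
    have hbu : g b ≠ g u := key b u (by rw [hb]; exact hl)
    have hbv : g b ≠ g v := key b v (by rw [hb, ← huv]; exact hl)
    have hab : g a ≠ g b := key a b (by rw [ha, hb]; exact hjl)
    revert hne hau hav hbu hbv hab
    generalize g u = x; generalize g v = y; generalize g a = z; generalize g b = w
    revert x y z w; omega
  -- Build the permutation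
  set σ₀ : Fin 3 → Fin 3 := fun i => g (Function.surjInv hfsurj i) with hσ₀
  have hσeq : ∀ v : V, g v = σ₀ (f v) := by
    intro v
    exact key2 v _ (Function.surjInv_eq hfsurj (f v)).symm
  have hinj : Function.Injective σ₀ := by
    intro i j hij
    have : f (Function.surjInv hfsurj i) = f (Function.surjInv hfsurj j) := by
      by_contra h
      exact key _ _ h hij
    rwa [Function.surjInv_eq hfsurj, Function.surjInv_eq hfsurj] at this
  exact ⟨Equiv.ofBijective σ₀ (Finite.injective_iff_bijective.mp hinj), hσeq⟩
end

section
/- Let t ≥ 33 be an integer and let ν, ν' be positive reals with ν' = ν^{1/4} and ν sufficiently small. Suppose J is a finite multiset of triples indexed so that each element has degree exactly l^{C(t,2)-3} in the bipartite incidence graph with the set Φ of functions φ: E(K_t) → [l], where the triple {i,j,k}_{abc} is incident to φ iff φ({i,j}) = a, φ({j,k}) = b, φ({i,k}) = c. Assume every φ ∈ Φ satisfies |J_φ| ≤ t³/27, where J_φ is the set of elements of J incident to φ. If |J| > (1-ν)·l³t³/27, then for at least (1-ν')·l^{C(t,2)} of the functions φ ∈ Φ, we have |J_φ| ≥ (1-ν')·|J|/l³.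 -/
set_option maxHeartbeats 1000000

open Finset

lemma count_three {α β : Type*} [Fintype α] [DecidableEq α] [Fintype β] [DecidableEq β]
    (e1 e2 e3 : α) (h12 : e1 ≠ e2) (h13 : e1 ≠ e3) (h23 : e2 ≠ e3) (a b c : β) :
    (Finset.univ.filter (fun φ : α → β => φ e1 = a ∧ φ e2 = b ∧ φ e3 = c)).card
      = Fintype.card β ^ (Fintype.card α - 3) := by
  classical
  rw [← Fintype.card_subtype]
  set s : Finset α := {e1, e2, e3} with hs
  have hcs : s.card = 3 := by
    rw [hs, Finset.card_insert_of_notMem (by simp [h12, h13]),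
      Finset.card_insert_of_notMem (by simp [h23]), Finset.card_singleton]
  set g : α → β := fun e => if e = e1 then a else if e = e2 then b else c with hg
  have key : ∀ φ : α → β, (φ e1 = a ∧ φ e2 = b ∧ φ e3 = c) ↔ ∀ e ∈ s, φ e = g e := by
    intro φ
    constructor
    · rintro ⟨ha, hb, hc⟩ e he
      simp only [hs, Finset.mem_insert, Finset.mem_singleton] at he
      rcases he with rfl | rfl | rfl <;>
        simp [hg, ha, hb, hc, h12, h13, h23, Ne.symm h12, Ne.symm h13, Ne.symm h23]
    · intro h
      refine ⟨?_, ?_, ?_⟩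
      · simpa [hg] using h e1 (by simp [hs])
      · simpa [hg, Ne.symm h12] using h e2 (by simp [hs])
      · simpa [hg, Ne.symm h13, Ne.symm h23] using h e3 (by simp [hs])
  have e : {φ : α → β // φ e1 = a ∧ φ e2 = b ∧ φ e3 = c} ≃ ({x : α // x ∉ s} → β) :=
    { toFun := fun φ x => φ.1 x.1
      invFun := fun ψ => ⟨fun e => if h : e ∈ s then g e else ψ ⟨e, h⟩, by
        refine (key (fun e => if h : e ∈ s then g e else ψ ⟨e, h⟩)).2 (fun e he => ?_); simp [he]⟩
      left_inv := by
        rintro ⟨φ, hφ⟩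
        ext e
        by_cases h : e ∈ s
        · simp [h, ((key φ).1 hφ e h).symm]
        · simp [h]
      right_inv := by
        intro ψ
        funext x
        simp [x.2] }
  rw [Fintype.card_congr e, Fintype.card_fun]
  congr 1
  rw [Fintype.card_subtype_compl, Fintype.card_coe, hcs]

/-- compatibility of a decorated triple with an edge-colouring -/
def Pcompat {t l : ℕ} (x : (Fin t × Fin t × Fin t) × (Fin l × Fin l × Fin l))
    (φ : {e : Finset (Fin t) // e.card = 2} → Fin l) : Prop :=
  ∀ e : {e : Finset (Fin t) // e.card = 2},
    (x.1.1 ∈ e.1 ∧ x.1.2.1 ∈ e.1 → φ e = x.2.1) ∧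
    (x.1.2.1 ∈ e.1 ∧ x.1.2.2 ∈ e.1 → φ e = x.2.2.1) ∧
    (x.1.1 ∈ e.1 ∧ x.1.2.2 ∈ e.1 → φ e = x.2.2.2)

instance {t l : ℕ} (x : (Fin t × Fin t × Fin t) × (Fin l × Fin l × Fin l))
    (φ : {e : Finset (Fin t) // e.card = 2} → Fin l) : Decidable (Pcompat x φ) := by
  unfold Pcompat; infer_instance

lemma hcount_aux {t l : ℕ} (i j k : Fin t) (a b c : Fin l) (hij : i < j) (hjk : j < k) :
    (Finset.univ.filter (fun φ : {e : Finset (Fin t) // e.card = 2} → Fin l =>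
      Pcompat ((i, j, k), (a, b, c)) φ)).card = l ^ (t.choose 2 - 3) := by
  classical
  have hik : i < k := hij.trans hjk
  have n12 : ({i, j} : Finset (Fin t)) ≠ {j, k} := by
    intro h
    have hi : i ∈ ({j, k} : Finset (Fin t)) := h ▸ Finset.mem_insert_self i {j}
    simp only [Finset.mem_insert, Finset.mem_singleton] at hi
    rcases hi with h' | h'
    · exact absurd h' hij.ne
    · exact absurd h' hik.ne
  have n13 : ({i, j} : Finset (Fin t)) ≠ {i, k} := by
    intro h
    have hj : j ∈ ({i, k} : Finset (Fin t)) := h ▸ (by simp : j ∈ ({i, j} : Finset (Fin t)))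
    simp only [Finset.mem_insert, Finset.mem_singleton] at hj
    rcases hj with h' | h'
    · exact absurd h'.symm hij.ne
    · exact absurd h' hjk.ne
  have n23 : ({j, k} : Finset (Fin t)) ≠ {i, k} := by
    intro h
    have hj : j ∈ ({i, k} : Finset (Fin t)) := h ▸ Finset.mem_insert_self j {k}
    simp only [Finset.mem_insert, Finset.mem_singleton] at hj
    rcases hj with h' | h'
    · exact absurd h'.symm hij.ne
    · exact absurd h' hjk.ne
  have hedge : ∀ (e : {e : Finset (Fin t) // e.card = 2}) (u v : Fin t), u ≠ v → u ∈ e.1 → v ∈ e.1 →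
      e.1 = ({u, v} : Finset (Fin t)) := by
    intro e u v huv hu hv
    refine (Finset.eq_of_subset_of_card_le ?_ ?_).symm
    · exact Finset.insert_subset hu (Finset.singleton_subset_iff.2 hv)
    · rw [e.2, Finset.card_pair huv]
  have hPiff : ∀ φ : {e : Finset (Fin t) // e.card = 2} → Fin l, Pcompat ((i, j, k), (a, b, c)) φ ↔
      (φ ⟨{i, j}, Finset.card_pair hij.ne⟩ = a ∧
       φ ⟨{j, k}, Finset.card_pair hjk.ne⟩ = b ∧
       φ ⟨{i, k}, Finset.card_pair hik.ne⟩ = c) := by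
    intro φ
    constructor
    · intro h
      exact ⟨(h _).1 ⟨by simp, by simp⟩, (h _).2.1 ⟨by simp, by simp⟩,
        (h _).2.2 ⟨by simp, by simp⟩⟩
    · rintro ⟨ha, hb, hc⟩ e
      refine ⟨fun ⟨hu, hv⟩ => ?_, fun ⟨hu, hv⟩ => ?_, fun ⟨hu, hv⟩ => ?_⟩
      · have he : e = ⟨{i, j}, Finset.card_pair hij.ne⟩ :=
          Subtype.ext (hedge e i j hij.ne hu hv)
        rw [he]; exact ha
      · have he : e = ⟨{j, k}, Finset.card_pair hjk.ne⟩ :=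
          Subtype.ext (hedge e j k hjk.ne hu hv)
        rw [he]; exact hb
      · have he : e = ⟨{i, k}, Finset.card_pair hik.ne⟩ :=
          Subtype.ext (hedge e i k hik.ne hu hv)
        rw [he]; exact hc
  have hcardE : Fintype.card {e : Finset (Fin t) // e.card = 2} = t.choose 2 := by
    rw [Fintype.card_finset_len, Fintype.card_fin]
  rw [Finset.filter_congr (fun φ _ => hPiff φ)]
  rw [count_three _ _ _ (fun h => n12 (congrArg Subtype.val h))
    (fun h => n13 (congrArg Subtype.val h)) (fun h => n23 (congrArg Subtype.val h))]
  rw [Fintype.card_fin, hcardE]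

/-- The averaging lemma (Lemma `markov` of the paper): with
`Φ = {φ : pairs of [t] → [l]}`, a multiset `J` of decorated triples
`{i,j,k}_{abc}` (`i<j<k`), each incident to exactly `l^{C(t,2)-3}` functions,
where `J_φ` denotes the set of elements of `J` compatible with `φ`: if every
`φ` satisfies `|J_φ| ≤ t³/27` and `|J| > (1-ν) l³ t³ / 27`, then for at least
`(1-ν') l^{C(t,2)}` of the functions `φ` we have `|J_φ| ≥ (1-ν')|J|/l³`. -/
theorem averaging_lemma (t l : ℕ) (ht : 33 ≤ t)
    (ν ν' : ℝ) (hν0 : 0 < ν) (hν1 : ν < 1) (hν' : ν' = ν ^ ((1 : ℝ) / 4))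
    (hsmall : (1 - ν' * (1 - ν')) * (1 - ν) ≥ 1 - ν')
    (J : Finset ((Fin t × Fin t × Fin t) × (Fin l × Fin l × Fin l)))
    (hJ : ∀ x ∈ J, x.1.1 < x.1.2.1 ∧ x.1.2.1 < x.1.2.2)
    (Jφ : ({e : Finset (Fin t) // e.card = 2} → Fin l) →
      Set ((Fin t × Fin t × Fin t) × (Fin l × Fin l × Fin l)))
    (hJφ : ∀ φ, Jφ φ = {x | x ∈ J ∧ ∀ e : {e : Finset (Fin t) // e.card = 2},
      (x.1.1 ∈ e.1 ∧ x.1.2.1 ∈ e.1 → φ e = x.2.1) ∧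
      (x.1.2.1 ∈ e.1 ∧ x.1.2.2 ∈ e.1 → φ e = x.2.2.1) ∧
      (x.1.1 ∈ e.1 ∧ x.1.2.2 ∈ e.1 → φ e = x.2.2.2)})
    (hbound : ∀ φ, (Nat.card (Jφ φ) : ℝ) ≤ (t : ℝ) ^ 3 / 27)
    (hbig : (J.card : ℝ) > (1 - ν) * l ^ 3 * t ^ 3 / 27) :
    (Nat.card {φ : {e : Finset (Fin t) // e.card = 2} → Fin l |
        (Nat.card (Jφ φ) : ℝ) ≥ (1 - ν') * J.card / l ^ 3} : ℝ) ≥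
      (1 - ν') * l ^ (t.choose 2) := by
  classical
  have hν'0 : 0 < ν' := by rw [hν']; exact Real.rpow_pos_of_pos hν0 _
  have hν'1 : ν' < 1 := by
    rw [hν']; exact Real.rpow_lt_one hν0.le hν1 (by norm_num)
  -- dispose of l = 0
  rcases Nat.eq_zero_or_pos l with rfl | hl
  · exfalso
    have hJe : J = ∅ := Finset.eq_empty_of_forall_notMem (fun x hx => x.2.1.elim0)
    rw [hJe] at hbig
    simp at hbig
  -- |J_φ| as a filter card
  have hJφcard : ∀ φ : {e : Finset (Fin t) // e.card = 2} → Fin l,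
      Nat.card (Jφ φ) = (J.filter (fun x => Pcompat x φ)).card := by
    intro φ
    have hst : Jφ φ = ↑(J.filter (fun x => Pcompat x φ)) := by
      rw [hJφ]
      ext x
      simp [Pcompat]
    rw [hst, Nat.card_coe_set_eq, Set.ncard_coe_finset]
  have hC3 : 3 ≤ t.choose 2 := by
    calc 3 = Nat.choose 3 2 := by norm_num
    _ ≤ t.choose 2 := Nat.choose_le_choose 2 (by omega)
  -- double counting
  have hsum : (∑ φ : {e : Finset (Fin t) // e.card = 2} → Fin l,
      (J.filter (fun x => Pcompat x φ)).card) = J.card * l ^ (t.choose 2 - 3) := by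
    simp_rw [Finset.card_filter]
    rw [Finset.sum_comm]
    have hinner : ∀ x ∈ J, (∑ φ : {e : Finset (Fin t) // e.card = 2} → Fin l,
        if Pcompat x φ then (1 : ℕ) else 0) = l ^ (t.choose 2 - 3) := by
      intro x hx
      rw [← Finset.card_filter]
      obtain ⟨hij, hjk⟩ := hJ x hx
      exact hcount_aux x.1.1 x.1.2.1 x.1.2.2 x.2.1 x.2.2.1 x.2.2.2 hij hjk
    rw [Finset.sum_congr rfl hinner, Finset.sum_const, smul_eq_mul]
  -- the set of good colourings
  set good : ({e : Finset (Fin t) // e.card = 2} → Fin l) → Prop :=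
    fun φ => (Nat.card (Jφ φ) : ℝ) ≥ (1 - ν') * J.card / l ^ 3 with hgood
  have hgoodcard : Nat.card {φ : {e : Finset (Fin t) // e.card = 2} → Fin l | good φ}
      = (Finset.univ.filter good).card := by
    rw [Nat.card_coe_set_eq, Set.ncard_eq_toFinset_card', Set.toFinset_setOf]
  have hNuniv : (Finset.univ :
      Finset ({e : Finset (Fin t) // e.card = 2} → Fin l)).card = l ^ t.choose 2 := by
    rw [Finset.card_univ, Fintype.card_fun, Fintype.card_fin, Fintype.card_finset_len,
      Fintype.card_fin]
  have hmN : (Finset.univ.filter good).card ≤ l ^ t.choose 2 :=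
    hNuniv ▸ Finset.card_filter_le _ _
  -- positivity facts
  have hL0 : (0 : ℝ) < (l : ℝ) ^ 3 := by positivity
  have ht0 : (0 : ℝ) < (t : ℝ) ^ 3 := by
    have : 0 < t := by omega
    positivity
  have hnu : (0 : ℝ) < 1 - ν := by linarith
  have hK0 : (0 : ℝ) < (J.card : ℝ) :=
    lt_trans (by positivity : (0:ℝ) < (1 - ν) * l ^ 3 * t ^ 3 / 27) hbig
  -- cast the double counting identity, multiplied by l^3
  have hsumR : (∑ φ : {e : Finset (Fin t) // e.card = 2} → Fin l,
      ((J.filter (fun x => Pcompat x φ)).card : ℝ)) * (l : ℝ) ^ 3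
      = (J.card : ℝ) * (l : ℝ) ^ (t.choose 2) := by
    have h2 : (∑ φ : {e : Finset (Fin t) // e.card = 2} → Fin l,
        (J.filter (fun x => Pcompat x φ)).card) * l ^ 3 = J.card * l ^ (t.choose 2) := by
      rw [hsum, mul_assoc, ← pow_add, Nat.sub_add_cancel hC3]
    exact_mod_cast congrArg (Nat.cast : ℕ → ℝ) h2
  -- upper bound on the sum
  have hsplit : (∑ φ : {e : Finset (Fin t) // e.card = 2} → Fin l,
      ((J.filter (fun x => Pcompat x φ)).card : ℝ))
      ≤ ((Finset.univ.filter good).card : ℝ) * ((t : ℝ) ^ 3 / 27)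
        + (((l : ℝ) ^ t.choose 2) - ((Finset.univ.filter good).card : ℝ))
          * ((1 - ν') * J.card / (l : ℝ) ^ 3) := by
    rw [← Finset.sum_filter_add_sum_filter_not Finset.univ good]
    have h1 : (∑ φ ∈ Finset.univ.filter good,
        ((J.filter (fun x => Pcompat x φ)).card : ℝ))
        ≤ ((Finset.univ.filter good).card : ℝ) * ((t : ℝ) ^ 3 / 27) := by
      rw [← nsmul_eq_mul]
      refine Finset.sum_le_card_nsmul _ _ _ (fun φ _ => ?_)
      have := hbound φ
      rwa [hJφcard φ] at this
    have hbadcard : ((Finset.univ.filter (fun φ => ¬ good φ)).card : ℝ)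
        = ((l : ℝ) ^ t.choose 2) - ((Finset.univ.filter good).card : ℝ) := by
      have h3 := Finset.card_filter_add_card_filter_not
        (s := (Finset.univ : Finset ({e : Finset (Fin t) // e.card = 2} → Fin l))) (p := good)
      rw [hNuniv] at h3
      have h4 : ((Finset.univ.filter good).card : ℝ)
          + ((Finset.univ.filter (fun φ => ¬ good φ)).card : ℝ) = (l : ℝ) ^ t.choose 2 := by
        exact_mod_cast congrArg (Nat.cast : ℕ → ℝ) h3
      linarith
    have h2 : (∑ φ ∈ Finset.univ.filter (fun φ => ¬ good φ),
        ((J.filter (fun x => Pcompat x φ)).card : ℝ))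
        ≤ (((l : ℝ) ^ t.choose 2) - ((Finset.univ.filter good).card : ℝ))
          * ((1 - ν') * J.card / (l : ℝ) ^ 3) := by
      rw [← hbadcard, ← nsmul_eq_mul]
      refine Finset.sum_le_card_nsmul _ _ _ (fun φ hφ => ?_)
      rw [Finset.mem_filter] at hφ
      have hφ' : ¬ ((Nat.card (Jφ φ) : ℝ) ≥ (1 - ν') * J.card / (l : ℝ) ^ 3) := hφ.2
      push_neg at hφ'
      rw [hJφcard φ] at hφ'
      exact hφ'.le
    exact add_le_add h1 h2
  -- the main inequality
  have hgoal : (1 - ν') * ((l : ℝ) ^ t.choose 2) ≤ ((Finset.univ.filter good).card : ℝ) := by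
    set M : ℝ := ((Finset.univ.filter good).card : ℝ) with hM
    set NR : ℝ := (l : ℝ) ^ t.choose 2 with hNR
    set K : ℝ := (J.card : ℝ) with hKd
    set L : ℝ := (l : ℝ) ^ 3 with hLd
    have hT : (1 - ν) * L * ((t:ℝ)^3 / 27) < K := by
      rw [hLd, hKd]
      calc (1 - ν) * (l:ℝ)^3 * ((t:ℝ)^3 / 27) = (1 - ν) * (l:ℝ)^3 * (t:ℝ)^3 / 27 := by ring
        _ < (J.card : ℝ) := hbig
    have hM0 : (0 : ℝ) ≤ M := Nat.cast_nonneg _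
    have step1 : (1 - ν) * (K * NR) ≤ (1 - ν) * ((M * ((t : ℝ) ^ 3 / 27)
        + (NR - M) * ((1 - ν') * K / L)) * L) := by
      refine mul_le_mul_of_nonneg_left ?_ hnu.le
      rw [← hsumR]
      exact mul_le_mul_of_nonneg_right hsplit hL0.le
    have step2 : (1 - ν) * ((M * ((t : ℝ) ^ 3 / 27)
        + (NR - M) * ((1 - ν') * K / L)) * L)
        = M * ((1 - ν) * L * ((t:ℝ)^3/27)) + (NR - M) * ((1 - ν') * (1 - ν)) * K := by
      field_simp
    have step3 : M * ((1 - ν) * L * ((t:ℝ)^3/27)) ≤ M * K :=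
      mul_le_mul_of_nonneg_left hT.le hM0
    have hA : ((1 - ν) * NR) * K ≤ (M + (NR - M) * ((1 - ν') * (1 - ν))) * K := by
      calc ((1 - ν) * NR) * K = (1 - ν) * (K * NR) := by ring
        _ ≤ (1 - ν) * ((M * ((t : ℝ) ^ 3 / 27)
            + (NR - M) * ((1 - ν') * K / L)) * L) := step1
        _ = M * ((1 - ν) * L * ((t:ℝ)^3/27)) + (NR - M) * ((1 - ν') * (1 - ν)) * K := step2
        _ ≤ M * K + (NR - M) * ((1 - ν') * (1 - ν)) * K := by linarith
        _ = (M + (NR - M) * ((1 - ν') * (1 - ν))) * K := by ring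
    have hB : (1 - ν) * NR ≤ M + (NR - M) * ((1 - ν') * (1 - ν)) :=
      le_of_mul_le_mul_right hA hK0
    have hq : (1 - ν') * (1 - ν) < 1 := by nlinarith
    have hN0 : (0 : ℝ) ≤ NR := by rw [hNR]; positivity
    have key : ((1 - ν') * NR) * (1 - (1 - ν') * (1 - ν))
        ≤ M * (1 - (1 - ν') * (1 - ν)) := by
      nlinarith [mul_nonneg hN0 (sub_nonneg.2 hsmall)]
    exact le_of_mul_le_mul_right key (by linarith)
  -- conclude
  calc (1 - ν') * (l : ℝ) ^ (t.choose 2)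
      ≤ ((Finset.univ.filter good).card : ℝ) := hgoal
    _ = _ := by rw [← hgoodcard]
end
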